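/- Let x ∉ D. Suppose I = liminf_n G_n'(x) is finite, where G_n'(x) = g_1'(x) + ⋯ + g_n'(x), and suppose T is approximately derivable at x. Then limsup_{r→0⁺} μ({y : 0 < |y − x| < r and (T(y) − T(x))/(y − x) ≤ I + 2/5}) / (2r) ≥ 2^{−6} and limsup_{r→0⁺} μ({y : 0 < |y − x| < r and (T(y) − T(x))/(y − x) ≥ I + 3/5}) / (2r) ≥ 2^{−6}, where μ denotes Lebesgue measure on ℝ. -/

import Mathlib

open MeasureTheory Filter Set Topology

noncomputable section

/-- The set of dyadic numbers of level `n`: `{k / 2^n : k ∈ ℤ}`. -/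
def Dset (n : ℕ) : Set ℝ := {y : ℝ | ∃ k : ℤ, y = (k : ℝ) / 2 ^ n}

/-- The set of all dyadic numbers. -/
def Ddyadic : Set ℝ := ⋃ n, Dset n

/-- `g k x = dist(x, D_k)`. -/
def g (k : ℕ) (x : ℝ) : ℝ := Metric.infDist x (Dset k)

/-- The Takagi function `T x = ∑_{k=1}^∞ g_k(x)`. -/
def T (x : ℝ) : ℝ := ∑' k : ℕ, g (k + 1) x

/-- `G' n x = g_1'(x) + ⋯ + g_n'(x)` (so `G' 0 x = 0`). -/
def G' (n : ℕ) (x : ℝ) : ℝ := ∑ k ∈ Finset.range n, deriv (g (k + 1)) x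

/-- `f` is approximately derivable at `x` with approximate derivative `L`:
for every `ε > 0`, the relative measure of the set of points `y` in `(x - r, x + r)`,
`y ≠ x`, where `|(f y - f x - L (y - x)) / (y - x)| ≥ ε`, divided by `2r`,
tends to `0` as `r → 0⁺`. -/
def ApproxDerivAt (f : ℝ → ℝ) (x L : ℝ) : Prop :=
  ∀ ε > (0 : ℝ), Tendsto
    (fun r : ℝ => volume (Ioo (x - r) (x + r) ∩
        {y : ℝ | y ≠ x ∧ ε ≤ |(f y - f x - L * (y - x)) / (y - x)|}) /
      ENNReal.ofReal (2 * r))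
    (nhdsWithin 0 (Ioi 0)) (nhds 0)

/-- Distance to the nearest integer. -/
def phi (r : ℝ) : ℝ := |r - round r|

lemma phi_nonneg (r : ℝ) : 0 ≤ phi r := abs_nonneg _

lemma phi_le_half (r : ℝ) : phi r ≤ 1 / 2 := abs_sub_round r

lemma phi_le (r : ℝ) (m : ℤ) : phi r ≤ |r - m| := by
  rcases eq_or_ne m (round r) with h | h
  · simp [phi, h]
  · have h1 : (1 : ℝ) ≤ |(m : ℝ) - round r| := by
      have : (m : ℝ) - round r = ((m - round r : ℤ) : ℝ) := by push_cast; ring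
      rw [this]
      exact_mod_cast Int.one_le_abs (by omega)
    have h2 : |(m:ℝ) - round r| ≤ |r - m| + |r - round r| := by
      have := abs_sub_abs_le_abs_sub ((m:ℝ) - r) ((round r : ℝ) - r)
      calc |(m:ℝ) - round r| = |((m:ℝ) - r) - ((round r : ℝ) - r)| := by ring_nf
        _ ≤ |(m:ℝ) - r| + |(round r:ℝ) - r| := abs_sub _ _
        _ = |r - m| + |r - round r| := by rw [abs_sub_comm ((m:ℝ)) r, abs_sub_comm ((round r:ℝ)) r]
    have h3 := phi_le_half r
    unfold phi at *
    linarith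

lemma phi_add_int (r : ℝ) (m : ℤ) : phi (r + m) = phi r := by
  unfold phi; rw [round_add_intCast]; push_cast; ring_nf

lemma phi_left {q : ℤ} {w : ℝ} (hw : w ∈ Icc (q : ℝ) ((q : ℝ) + 1 / 2)) :
    phi w = w - q := by
  have h : phi w = phi (w - q) := by
    rw [← phi_add_int (w - q) q]; ring_nf
  rw [h]
  rcases eq_or_lt_of_le hw.2 with he | hl
  · have : w - q = 1/2 := by linarith [hw.1]
    rw [this]; unfold phi
    norm_num [round_eq]
  · have h0 : round (w - q) = 0 := by
      rw [round_eq, Int.floor_eq_zero_iff]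
      constructor
      · simp; linarith [hw.1]
      · simp; linarith [hl]
    unfold phi; rw [h0]
    push_cast
    rw [abs_of_nonneg (by linarith [hw.1])]
    ring

lemma phi_right {q : ℤ} {w : ℝ} (hw : w ∈ Icc ((q : ℝ) - 1 / 2) (q : ℝ)) :
    phi w = q - w := by
  have h : phi w = phi (w - q) := by
    rw [← phi_add_int (w - q) q]; ring_nf
  rw [h]
  have h0 : round (w - q) = 0 := by
    rw [round_eq, Int.floor_eq_zero_iff]
    constructor
    · simp; linarith [hw.1]
    · simp; linarith [hw.2]
  unfold phi; rw [h0]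
  push_cast
  rw [abs_of_nonpos (by linarith [hw.2])]
  ring

lemma phi_two_mul (r : ℝ) : phi (2 * r) ≤ 2 * phi r := by
  calc phi (2*r) ≤ |2*r - ((2 * round r : ℤ) : ℝ)| := phi_le _ _
    _ = 2 * phi r := by
        unfold phi
        rw [show 2*r - ((2 * round r : ℤ) : ℝ) = 2 * (r - round r) by push_cast; ring,
          abs_mul]
        norm_num

lemma phi_pow_mul (k : ℕ) (r : ℝ) : phi (2 ^ k * r) ≤ 2 ^ k * phi r := by
  induction k with
  | zero => simp
  | succ k ih =>
      have : (2:ℝ) ^ (k+1) * r = 2 * (2 ^ k * r) := by ring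
      rw [this]
      calc phi (2 * (2^k*r)) ≤ 2 * phi (2^k*r) := phi_two_mul _
        _ ≤ 2 * (2^k * phi r) := by linarith
        _ = 2^(k+1) * phi r := by ring

lemma g_eq (k : ℕ) (x : ℝ) : g k x = phi (2 ^ k * x) / 2 ^ k := by
  have hpow : (0:ℝ) < 2 ^ k := by positivity
  have habs : ∀ j : ℤ, |x - (j:ℝ)/2^k| = |2^k * x - j| / 2^k := by
    intro j
    rw [eq_div_iff (ne_of_gt hpow), ← abs_of_pos hpow, ← abs_mul]
    congr 1; field_simp; rw [abs_of_pos hpow]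
  unfold g
  apply le_antisymm
  · have hm : ((round ((2:ℝ) ^ k * x) : ℝ) / 2 ^ k) ∈ Dset k := ⟨round ((2:ℝ)^k * x), rfl⟩
    calc Metric.infDist x (Dset k) ≤ dist x ((round ((2:ℝ)^k * x) : ℝ) / 2^k) :=
          Metric.infDist_le_dist_of_mem hm
      _ = phi (2^k * x) / 2^k := by rw [Real.dist_eq, habs]; rfl
  · by_contra hlt
    push_neg at hlt
    obtain ⟨y, hy, hdy⟩ := (Metric.infDist_lt_iff (⟨(0:ℝ), ⟨0, by simp⟩⟩ : (Dset k).Nonempty)).1 hlt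
    obtain ⟨j, rfl⟩ := hy
    rw [Real.dist_eq, habs] at hdy
    have : phi (2^k*x) / 2^k ≤ |2^k*x - j| / 2^k := by gcongr; exact phi_le _ _
    linarith

/-- The classical Takagi function. -/
def tau (u : ℝ) : ℝ := ∑' k : ℕ, phi (2 ^ k * u) / 2 ^ k

lemma bound_aux (u : ℝ) (k : ℕ) : phi (2 ^ k * u) / 2 ^ k ≤ (1/2) * (1/2)^k := by
  have h2 : (0:ℝ) < 2^k := by positivity
  have h3 : phi (2 ^ k * u) / 2 ^ k ≤ (1/2) / 2^k := by gcongr; exact phi_le_half _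
  calc phi (2 ^ k * u) / 2 ^ k ≤ (1/2)/2^k := h3
    _ = (1/2)*(1/2)^k := by rw [one_div_pow, mul_one_div, div_div]

lemma summable_tau (u : ℝ) : Summable (fun k : ℕ => phi (2 ^ k * u) / 2 ^ k) := by
  apply Summable.of_nonneg_of_le (fun k => div_nonneg (phi_nonneg _) (by positivity))
    (bound_aux u)
  exact (summable_geometric_of_lt_one (by norm_num) (by norm_num)).mul_left _

lemma tau_nonneg (u : ℝ) : 0 ≤ tau u :=
  tsum_nonneg (fun k => div_nonneg (phi_nonneg _) (by positivity))

lemma tau_le_one (u : ℝ) : tau u ≤ 1 := by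
  have h := Summable.tsum_le_tsum (bound_aux u) (summable_tau u)
    ((summable_geometric_of_lt_one (by norm_num) (by norm_num)).mul_left _)
  calc tau u ≤ ∑' k : ℕ, (1/2)*(1/2:ℝ)^k := h
    _ = (1/2) * (1 - 1/2)⁻¹ := by
        rw [tsum_mul_left, tsum_geometric_of_lt_one (by norm_num) (by norm_num)]
    _ = 1 := by norm_num

lemma tau_split (m : ℕ) (u : ℝ) :
    tau u = ∑ k ∈ Finset.range m, phi (2 ^ k * u) / 2 ^ k + tau (2 ^ m * u) / 2 ^ m := by
  have h := (Summable.sum_add_tsum_nat_add (f := fun k : ℕ => phi (2 ^ k * u) / 2 ^ k) m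
    (summable_tau u)).symm
  rw [show tau u = ∑' k : ℕ, phi (2 ^ k * u) / 2 ^ k from rfl, h]
  congr 1
  rw [show tau (2^m*u) = ∑' k : ℕ, phi (2 ^ k * (2^m*u)) / 2 ^ k from rfl, ← tsum_div_const]
  apply tsum_congr
  intro k
  rw [show (2:ℝ)^(k+m) * u = 2^k*(2^m*u) by ring]
  rw [div_div, ← pow_add]

lemma tau_add_int (u : ℝ) (m : ℤ) : tau (u + m) = tau u := by
  unfold tau
  apply tsum_congr
  intro k
  congr 1
  rw [show (2:ℝ)^k * (u + m) = 2^k*u + ((2^k*m : ℤ) : ℝ) by push_cast; ring]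
  exact phi_add_int _ _

lemma tau_le_lin (u : ℝ) : tau u ≤ 5 * phi u + 1 / 32 := by
  have h := tau_split 5 u
  have hterm : ∀ k : ℕ, phi (2^k*u)/2^k ≤ phi u := by
    intro k
    rw [div_le_iff₀ (by positivity)]
    calc phi (2^k*u) ≤ 2^k * phi u := phi_pow_mul k u
      _ = phi u * 2^k := by ring
  have htail : tau (2^5*u)/2^5 ≤ 1/32 := by
    have h1 := tau_le_one (2^5*u)
    rw [div_le_iff₀ (by positivity)]
    norm_num at h1 ⊢
    linarith
  have hsum : ∑ k ∈ Finset.range 5, phi (2^k*u)/2^k ≤ 5 * phi u := by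
    calc ∑ k ∈ Finset.range 5, phi (2^k*u)/2^k ≤ ∑ _k ∈ Finset.range 5, phi u :=
          Finset.sum_le_sum (fun k _ => hterm k)
      _ = 5 * phi u := by simp
  linarith

lemma tau_ge_quarter {u : ℝ} (hu : u ∈ Icc (1/4 : ℝ) (1/2)) : 1/2 ≤ tau u := by
  have h := tau_split 2 u
  rw [Finset.sum_range_succ, Finset.sum_range_succ, Finset.sum_range_zero] at h
  norm_num at h
  have h0 : phi u = u := by
    simpa using phi_left (q := 0) (w := u)
      (by simp only [Int.cast_zero, mem_Icc, zero_add]; constructor <;> linarith [hu.1, hu.2])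
  have h1 : phi (2*u) = 1 - 2*u := by
    have := phi_right (q := 1) (w := 2*u)
      (by simp only [Int.cast_one, mem_Icc]; constructor <;> linarith [hu.1, hu.2])
    simpa using this
  have htail : 0 ≤ tau (4*u)/4 := div_nonneg (tau_nonneg _) (by norm_num)
  rw [h, h0, h1]
  linarith

lemma tau_ge_F3 {u : ℝ} (hu : u ∈ Icc (5/16 : ℝ) (11/32)) : 5/8 ≤ tau u := by
  have h := tau_split 4 u
  rw [Finset.sum_range_succ, Finset.sum_range_succ, Finset.sum_range_succ,
    Finset.sum_range_succ, Finset.sum_range_zero] at h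
  norm_num at h
  have h0 : phi u = u := by
    simpa using phi_left (q := 0) (w := u)
      (by simp only [Int.cast_zero, mem_Icc, zero_add]; constructor <;> linarith [hu.1, hu.2])
  have h1 : phi (2*u) = 1 - 2*u := by
    have := phi_right (q := 1) (w := 2*u)
      (by simp only [Int.cast_one, mem_Icc]; constructor <;> linarith [hu.1, hu.2])
    simpa using this
  have h2 : phi (4*u) = 4*u - 1 := by
    have := phi_left (q := 1) (w := 4*u)
      (by simp only [Int.cast_one, mem_Icc]; constructor <;> linarith [hu.1, hu.2])
    simpa using this
  have h3 : phi (8*u) = 3 - 8*u := by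
    have := phi_right (q := 3) (w := 8*u)
      (by norm_num only; simp only [mem_Icc]; constructor <;> linarith [hu.1, hu.2])
    simpa using this
  have htail : 0 ≤ tau (16*u)/16 := div_nonneg (tau_nonneg _) (by norm_num)
  rw [h, h0, h1, h2, h3]
  linarith

lemma summable_T (x : ℝ) : Summable (fun k : ℕ => g (k + 1) x) := by
  apply Summable.congr ((summable_tau (2*x)).div_const 2)
  intro k
  rw [g_eq]
  rw [show (2:ℝ)^k * (2*x) = 2^(k+1)*x by ring, div_div, ← pow_succ]

lemma T_split (n : ℕ) (x : ℝ) :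
    T x = ∑ k ∈ Finset.range n, g (k + 1) x + tau (2 ^ (n + 1) * x) / 2 ^ (n + 1) := by
  have h := (Summable.sum_add_tsum_nat_add (f := fun k : ℕ => g (k + 1) x) n (summable_T x)).symm
  rw [show T x = ∑' k : ℕ, g (k+1) x from rfl, h]
  congr 1
  rw [show tau (2^(n+1)*x) = ∑' k : ℕ, phi (2 ^ k * (2^(n+1)*x)) / 2 ^ k from rfl,
    ← tsum_div_const]
  apply tsum_congr
  intro k
  rw [g_eq, show k+n+1 = k+(n+1) from by omega, pow_add, div_div, mul_assoc]

lemma g_affine {j : ℕ} {p : ℤ} {y : ℝ} (hy : 2 ^ j * y ∈ Icc ((p : ℝ) / 2) (((p : ℝ) + 1) / 2)) :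
    g j y = if Even p then y - (p : ℝ) / 2 ^ (j + 1) else ((p : ℝ) + 1) / 2 ^ (j + 1) - y := by
  rw [g_eq]
  have hpow : (0:ℝ) < 2^j := by positivity
  rcases Int.even_or_odd p with he | ho
  · obtain ⟨q, hq⟩ := he
    rw [if_pos ⟨q, hq⟩]
    have hmem : 2^j*y ∈ Icc (q:ℝ) ((q:ℝ) + 1/2) := by
      constructor
      · have := hy.1; rw [hq] at this; push_cast at this ⊢; linarith
      · have := hy.2; rw [hq] at this; push_cast at this ⊢; linarith
    rw [phi_left hmem, hq]
    push_cast
    field_simp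
    ring
  · obtain ⟨q, hq⟩ := ho
    rw [if_neg (by rw [hq, Int.even_iff]; omega)]
    have hmem : 2^j*y ∈ Icc (((q:ℝ)+1) - 1/2) ((q:ℝ)+1) := by
      constructor
      · have := hy.1; rw [hq] at this; push_cast at this ⊢; linarith
      · have := hy.2; rw [hq] at this; push_cast at this ⊢; linarith
    have := phi_right (q := q + 1) (w := 2^j*y) (by push_cast; push_cast at hmem; exact hmem)
    rw [this, hq]
    push_cast
    field_simp
    ring

lemma mem_halfint (x : ℝ) {n j : ℕ} (hj : j ≤ n) {y : ℝ}
    (hy : y ∈ Icc ((⌊2^(n+1)*x⌋ : ℝ)/2^(n+1)) ((⌊2^(n+1)*x⌋ : ℝ)/2^(n+1) + ((2:ℝ)^(n+1))⁻¹)) :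
    2^j * y ∈ Icc ((⌊2^(j+1)*x⌋ : ℝ)/2) (((⌊2^(j+1)*x⌋ : ℝ) + 1)/2) := by
  set m : ℤ := ⌊2^(n+1)*x⌋ with hm
  set p : ℤ := ⌊2^(j+1)*x⌋ with hp
  set d : ℕ := n - j with hd
  have hnd : n + 1 = (j + 1) + d := by omega
  have hE : (2:ℝ)^(n+1) = 2^(j+1) * 2^d := by rw [hnd, pow_add]
  have hdpos : (0:ℝ) < 2^d := by positivity
  have hjpos : (0:ℝ) < 2^(j+1) := by positivity
  have hp1 : (p:ℝ) ≤ 2^(j+1)*x := Int.floor_le _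
  have hp2 : 2^(j+1)*x < (p:ℝ) + 1 := Int.lt_floor_add_one _
  have key1 : (p:ℝ) * 2^d ≤ (m:ℝ) := by
    have : (p * 2^d : ℤ) ≤ m := by
      rw [hm]
      apply Int.le_floor.2
      push_cast
      calc ((p:ℝ)) * 2^d ≤ (2^(j+1)*x) * 2^d := by
            apply mul_le_mul_of_nonneg_right hp1 (le_of_lt hdpos)
        _ = 2^(n+1)*x := by rw [hE]; ring
    exact_mod_cast this
  have key2 : (m:ℝ) + 1 ≤ ((p:ℝ) + 1) * 2^d := by
    have : m + 1 ≤ (p + 1) * 2^d := by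
      have hlt : m < (p+1) * 2^d := by
        rw [hm]
        apply Int.floor_lt.2
        push_cast
        calc (2:ℝ)^(n+1)*x = (2^(j+1)*x) * 2^d := by rw [hE]; ring
          _ < ((p:ℝ)+1) * 2^d := by
              apply mul_lt_mul_of_pos_right hp2 hdpos
      exact Int.lt_iff_add_one_le.mp hlt
    exact_mod_cast this
  have h2ja : 2^(j+1) * ((m:ℝ)/2^(n+1)) = (m:ℝ)/2^d := by
    rw [hE]; field_simp
  have h2jb : 2^(j+1) * ((m:ℝ)/2^(n+1) + ((2:ℝ)^(n+1))⁻¹) = ((m:ℝ)+1)/2^d := by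
    rw [hE]; field_simp
  constructor
  · have h1 : 2^(j+1) * ((m:ℝ)/2^(n+1)) ≤ 2^(j+1) * y :=
      mul_le_mul_of_nonneg_left hy.1 (le_of_lt hjpos)
    rw [h2ja] at h1
    have h2 : (p:ℝ) ≤ (m:ℝ)/2^d := by rw [le_div_iff₀ hdpos]; linarith
    have h3 : (p:ℝ) ≤ 2^(j+1)*y := le_trans h2 h1
    have : (2:ℝ)^(j+1)*y = 2*(2^j*y) := by rw [pow_succ]; ring
    rw [this] at h3
    linarith
  · have h1 : 2^(j+1) * y ≤ 2^(j+1) * ((m:ℝ)/2^(n+1) + ((2:ℝ)^(n+1))⁻¹) :=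
      mul_le_mul_of_nonneg_left hy.2 (le_of_lt hjpos)
    rw [h2jb] at h1
    have h2 : ((m:ℝ)+1)/2^d ≤ (p:ℝ)+1 := by rw [div_le_iff₀ hdpos]; linarith
    have h3 : 2^(j+1)*y ≤ (p:ℝ)+1 := le_trans h1 h2
    have : (2:ℝ)^(j+1)*y = 2*(2^j*y) := by rw [pow_succ]; ring
    rw [this] at h3
    linarith

lemma x_mem_Ioo {x : ℝ} (hx : ∀ (k : ℕ) (z : ℤ), 2^k * x ≠ z) (n : ℕ) :
    x ∈ Ioo ((⌊2^(n+1)*x⌋ : ℝ)/2^(n+1)) ((⌊2^(n+1)*x⌋ : ℝ)/2^(n+1) + ((2:ℝ)^(n+1))⁻¹) := by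
  have hpos : (0:ℝ) < 2^(n+1) := by positivity
  have h1 : (⌊2^(n+1)*x⌋ : ℝ) < 2^(n+1)*x :=
    lt_of_le_of_ne (Int.floor_le _) (fun h => hx (n+1) _ h.symm)
  have h2 : 2^(n+1)*x < (⌊2^(n+1)*x⌋ : ℝ) + 1 := Int.lt_floor_add_one _
  constructor
  · rw [div_lt_iff₀ hpos]; linarith
  · rw [show (⌊2^(n+1)*x⌋:ℝ)/2^(n+1) + ((2:ℝ)^(n+1))⁻¹ = ((⌊2^(n+1)*x⌋:ℝ)+1)/2^(n+1) from by
      field_simp, lt_div_iff₀ hpos]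
    linarith

lemma deriv_g {x : ℝ} (hx : ∀ (k : ℕ) (z : ℤ), 2^k * x ≠ z) (j : ℕ) :
    deriv (g (j+1)) x = if Even ⌊2^(j+2)*x⌋ then 1 else -1 := by
  have hIoo := x_mem_Ioo hx (j+1)
  have hnb : Ioo ((⌊2^(j+1+1)*x⌋ : ℝ)/2^(j+1+1)) ((⌊2^(j+1+1)*x⌋ : ℝ)/2^(j+1+1) + ((2:ℝ)^(j+1+1))⁻¹)
      ∈ 𝓝 x := Ioo_mem_nhds hIoo.1 hIoo.2
  set p : ℤ := ⌊2^(j+2)*x⌋ with hp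
  have hp' : p = ⌊2^(j+1+1)*x⌋ := by rw [hp]
  have heq : g (j+1) =ᶠ[𝓝 x]
      (fun y => if Even p then y - (p : ℝ) / 2 ^ (j+1+1) else ((p : ℝ) + 1) / 2 ^ (j+1+1) - y) := by
    filter_upwards [hnb] with y hy
    have hmem := mem_halfint x (le_refl (j+1)) (Ioo_subset_Icc_self hy)
    rw [← hp'] at hmem
    exact g_affine hmem
  rw [Filter.EventuallyEq.deriv_eq heq]
  by_cases hpe : Even p
  · simp only [hpe, if_true]
    exact ((hasDerivAt_id x).sub_const _).deriv
  · simp only [hpe, if_false]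
    have h := ((hasDerivAt_id x).const_sub (((p : ℝ) + 1) / 2 ^ (j+1+1))).deriv
    simpa using h

lemma decomp {x : ℝ} (hx : ∀ (k : ℕ) (z : ℤ), 2^k * x ≠ z) (n : ℕ) {y : ℝ}
    (hy : y ∈ Icc ((⌊2^(n+1)*x⌋ : ℝ)/2^(n+1)) ((⌊2^(n+1)*x⌋ : ℝ)/2^(n+1) + ((2:ℝ)^(n+1))⁻¹)) :
    T y - T x = G' n x * (y - x) +
      (tau (2^(n+1)*y - (⌊2^(n+1)*x⌋ : ℝ)) - tau (2^(n+1)*x - (⌊2^(n+1)*x⌋ : ℝ))) / 2^(n+1) := by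
  set m : ℤ := ⌊2^(n+1)*x⌋ with hm
  have hxIcc : x ∈ Icc ((m:ℝ)/2^(n+1)) ((m:ℝ)/2^(n+1) + ((2:ℝ)^(n+1))⁻¹) :=
    Ioo_subset_Icc_self (x_mem_Ioo hx n)
  have hty : ∀ z : ℝ, tau (2^(n+1)*z) = tau (2^(n+1)*z - (m:ℝ)) := by
    intro z
    conv_lhs => rw [show (2:ℝ)^(n+1)*z = (2^(n+1)*z - (m:ℝ)) + (m:ℝ) by ring]
    exact_mod_cast tau_add_int (2^(n+1)*z - (m:ℝ)) m
  have hhead : ∀ k ∈ Finset.range n, g (k+1) y - g (k+1) x = deriv (g (k+1)) x * (y - x) := by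
    intro k hk
    have hkn : k + 1 ≤ n := Finset.mem_range.1 hk
    have hmy := mem_halfint x hkn hy
    have hmx := mem_halfint x hkn hxIcc
    rw [g_affine hmy, g_affine hmx, deriv_g hx k]
    have : (⌊2^(k+1+1)*x⌋ : ℤ) = ⌊2^(k+2)*x⌋ := by norm_num
    rw [this]
    by_cases hpe : Even ⌊2^(k+2)*x⌋
    · simp only [hpe, if_true]; ring
    · simp only [hpe, if_false]; ring
  have h1 := T_split n y
  have h2 := T_split n x
  rw [h1, h2, hty y, hty x]
  have hsum : ∑ k ∈ Finset.range n, g (k+1) y - ∑ k ∈ Finset.range n, g (k+1) x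
      = G' n x * (y - x) := by
    rw [← Finset.sum_sub_distrib, Finset.sum_congr rfl hhead, ← Finset.sum_mul]
    rfl
  have hdiv : tau (2^(n+1)*y - (m:ℝ))/2^(n+1) - tau (2^(n+1)*x - (m:ℝ))/2^(n+1)
      = (tau (2^(n+1)*y - (m:ℝ)) - tau (2^(n+1)*x - (m:ℝ)))/2^(n+1) := by ring
  linarith [hsum, hdiv]

section claims
variable {x : ℝ} (n : ℕ)

lemma phi_eq_self {u : ℝ} (h0 : 0 ≤ u) (h1 : u ≤ 1/2) : phi u = u := by
  simpa using phi_left (q := 0) (w := u)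
    (by simp only [Int.cast_zero, mem_Icc, zero_add]; exact ⟨h0, h1⟩)

lemma phi_eq_one_sub {u : ℝ} (h0 : 1/2 ≤ u) (h1 : u ≤ 1) : phi u = 1 - u := by
  have := phi_right (q := 1) (w := u)
    (by simp only [Int.cast_one, mem_Icc]; constructor <;> linarith)
  simpa using this

/-- Main quotient formula. -/
lemma quot_formula (hx : ∀ (k : ℕ) (z : ℤ), 2^k * x ≠ z) {y : ℝ}
    (hy : y ∈ Icc ((⌊2^(n+1)*x⌋ : ℝ)/2^(n+1)) ((⌊2^(n+1)*x⌋ : ℝ)/2^(n+1) + ((2:ℝ)^(n+1))⁻¹))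
    (hne : y ≠ x) :
    (T y - T x) / (y - x) = G' n x +
      (tau (2^(n+1)*y - (⌊2^(n+1)*x⌋ : ℝ)) - tau (2^(n+1)*x - (⌊2^(n+1)*x⌋ : ℝ))) /
        ((2^(n+1)*y - (⌊2^(n+1)*x⌋ : ℝ)) - (2^(n+1)*x - (⌊2^(n+1)*x⌋ : ℝ))) := by
  have hd := decomp hx n hy
  have hyx : y - x ≠ 0 := sub_ne_zero.2 hne
  have hP : ((2:ℝ)^(n+1)) ≠ 0 := by positivity
  have hut : (2^(n+1)*y - (⌊2^(n+1)*x⌋ : ℝ)) - (2^(n+1)*x - (⌊2^(n+1)*x⌋ : ℝ))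
      = 2^(n+1)*(y - x) := by ring
  rw [hd, hut]
  field_simp

/-- Claim A inclusion. -/
lemma claimA (hx : ∀ (k : ℕ) (z : ℤ), 2^k * x ≠ z) {I : ℝ} (hG : G' n x = I)
    (ht : 2^(n+1)*x - (⌊2^(n+1)*x⌋ : ℝ) < 1/2) :
    Ioc ((⌊2^(n+1)*x⌋ : ℝ)/2^(n+1) + (31/32) * ((2:ℝ)^(n+1))⁻¹)
        ((⌊2^(n+1)*x⌋ : ℝ)/2^(n+1) + (31/32) * ((2:ℝ)^(n+1))⁻¹ + (1/32) * ((2:ℝ)^(n+1))⁻¹)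
      ⊆ {y : ℝ | 0 < |y - x| ∧ |y - x| < ((2:ℝ)^(n+1))⁻¹ ∧
          (T y - T x) / (y - x) ≤ I + 2/5} := by
  intro y hy
  set m : ℤ := ⌊2^(n+1)*x⌋ with hm
  set P : ℝ := (2:ℝ)^(n+1) with hP
  have hPpos : 0 < P := by positivity
  have hPh : P * P⁻¹ = 1 := mul_inv_cancel₀ (ne_of_gt hPpos)
  have hPa : P * ((m:ℝ)/P) = (m:ℝ) := by field_simp
  set t : ℝ := P*x - (m:ℝ) with hts
  set u : ℝ := P*y - (m:ℝ) with hus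
  have hxI := x_mem_Ioo hx n
  have ht0 : 0 < t := by
    have := hxI.1
    have h2 : P * ((m:ℝ)/P) < P * x := by exact mul_lt_mul_of_pos_left this hPpos
    rw [hPa] at h2; rw [hts]; linarith
  have hu1 : 31/32 < u := by
    have := hy.1
    have h2 : P * ((m:ℝ)/P + 31/32 * P⁻¹) < P * y := mul_lt_mul_of_pos_left this hPpos
    rw [mul_add, hPa] at h2
    have h3 : P * (31/32 * P⁻¹) = 31/32 := by rw [mul_comm (31/32 : ℝ) P⁻¹, ← mul_assoc, hPh]; ring
    rw [h3] at h2; rw [hus]; linarith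
  have hu2 : u ≤ 1 := by
    have := hy.2
    have h2 : P * y ≤ P * ((m:ℝ)/P + 31/32 * P⁻¹ + 1/32 * P⁻¹) :=
      mul_le_mul_of_nonneg_left this (le_of_lt hPpos)
    rw [mul_add, mul_add, hPa] at h2
    have h3 : P * (31/32 * P⁻¹) = 31/32 := by rw [mul_comm (31/32 : ℝ) P⁻¹, ← mul_assoc, hPh]; ring
    have h4 : P * (1/32 * P⁻¹) = 1/32 := by rw [mul_comm (1/32 : ℝ) P⁻¹, ← mul_assoc, hPh]; ring
    rw [h3, h4] at h2; rw [hus]; linarith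
  have hut : u - t = P * (y - x) := by rw [hus, hts]; ring
  have hutpos : 0 < u - t := by linarith
  have hyx : 0 < y - x := by nlinarith
  have hyIcc : y ∈ Icc ((m:ℝ)/P) ((m:ℝ)/P + P⁻¹) := by
    constructor
    · have := hy.1; have h31 : (0:ℝ) < 31/32 * P⁻¹ := by positivity
      linarith [hy.1]
    · have := hy.2; linarith [hy.2]
  refine ⟨by rw [abs_of_pos hyx]; exact hyx, ?_, ?_⟩
  · rw [abs_of_pos hyx]
    have : P * (y - x) < 1 := by linarith [hutpos, hu2, ht0]
    rw [show (P:ℝ)⁻¹ = 1/P by rw [one_div]]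
    rw [lt_div_iff₀ hPpos]
    linarith [this]
  · rw [quot_formula n hx hyIcc (ne_of_gt (by linarith : x < y)), hG]
    have hq : (tau u - tau t) / (u - t) ≤ 2/5 := by
      rw [div_le_iff₀ hutpos]
      have h1 : tau u ≤ 5 * (1 - u) + 1/32 := by
        have := tau_le_lin u
        rw [phi_eq_one_sub (by linarith) hu2] at this
        exact this
      have h2 : 0 ≤ tau t := tau_nonneg t
      nlinarith
    linarith [hq]

set_option maxHeartbeats 1000000 in
/-- Claim B inclusion: some length-`h/32` interval sits inside the B-set. -/
lemma claimB (hx : ∀ (k : ℕ) (z : ℤ), 2^k * x ≠ z) {I : ℝ} (hG : G' n x = I)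
    (ht : 2^(n+1)*x - (⌊2^(n+1)*x⌋ : ℝ) < 1/2) :
    ∃ c : ℝ, Ioc c (c + (1/32) * ((2:ℝ)^(n+1))⁻¹)
      ⊆ {y : ℝ | 0 < |y - x| ∧ |y - x| < ((2:ℝ)^(n+1))⁻¹ ∧
          I + 3/5 ≤ (T y - T x) / (y - x)} := by
  set m : ℤ := ⌊2^(n+1)*x⌋ with hm
  set P : ℝ := (2:ℝ)^(n+1) with hP
  have hPpos : 0 < P := by positivity
  have hPh : P * P⁻¹ = 1 := mul_inv_cancel₀ (ne_of_gt hPpos)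
  have hPa : P * ((m:ℝ)/P) = (m:ℝ) := by field_simp
  set t : ℝ := P*x - (m:ℝ) with hts
  have hxI := x_mem_Ioo hx n
  have ht0 : 0 < t := by
    have h2 : P * ((m:ℝ)/P) < P * x := mul_lt_mul_of_pos_left hxI.1 hPpos
    rw [hPa] at h2; rw [hts]; linarith
  set v : ℝ := tau t with hvs
  have hv0 : 0 ≤ v := tau_nonneg t
  have hvle : v ≤ 5 * t + 1/32 := by
    have := tau_le_lin t
    rw [phi_eq_self (le_of_lt ht0) (le_of_lt ht)] at this
    exact this
  -- generic step: given a target window [c₁, c₁+1/32] in u-coordinates with the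
  -- quotient property, conclude.
  have key : ∀ c₁ : ℝ, 0 ≤ c₁ → c₁ + 1/32 ≤ 1 →
      (∀ u : ℝ, c₁ < u → u ≤ c₁ + 1/32 → u ≠ t ∧ 3/5 ≤ (tau u - v)/(u - t)) →
      ∃ c : ℝ, Ioc c (c + (1/32) * P⁻¹)
        ⊆ {y : ℝ | 0 < |y - x| ∧ |y - x| < P⁻¹ ∧ I + 3/5 ≤ (T y - T x) / (y - x)} := by
    intro c₁ hc₁0 hc₁1 hu
    refine ⟨(m:ℝ)/P + c₁ * P⁻¹, ?_⟩
    intro y hy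
    set u : ℝ := P*y - (m:ℝ) with hus
    have hq1 : c₁ < u := by
      have h2 : P * ((m:ℝ)/P + c₁ * P⁻¹) < P * y := mul_lt_mul_of_pos_left hy.1 hPpos
      rw [mul_add, hPa, mul_comm c₁ P⁻¹, ← mul_assoc, hPh, one_mul] at h2
      rw [hus]; linarith
    have hq2 : u ≤ c₁ + 1/32 := by
      have h2 : P * y ≤ P * ((m:ℝ)/P + c₁ * P⁻¹ + 1/32 * P⁻¹) :=
        mul_le_mul_of_nonneg_left hy.2 (le_of_lt hPpos)
      rw [mul_add, mul_add, hPa, mul_comm c₁ P⁻¹, ← mul_assoc, hPh, one_mul,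
        mul_comm (1/32:ℝ) P⁻¹, ← mul_assoc, hPh, one_mul] at h2
      rw [hus]; linarith
    obtain ⟨hne, hquot⟩ := hu u hq1 hq2
    have hut : u - t = P * (y - x) := by rw [hus, hts]; ring
    have hu0 : 0 < u := lt_of_le_of_lt hc₁0 hq1
    have hu1 : u ≤ 1 := le_trans hq2 hc₁1
    have ht1 : t < 1 := lt_trans ht (by norm_num)
    have hyne : y ≠ x := by
      intro h; apply hne; rw [hus, hts, h]
    have habs : |y - x| < P⁻¹ := by
      have h1 : |u - t| < 1 := by
        rw [abs_lt]; constructor <;> nlinarith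
      rw [hut] at h1
      rw [abs_lt] at h1 ⊢
      have h2 : |P * (y-x)| = P * |y - x| := by
        rw [abs_mul, abs_of_pos hPpos]
      constructor
      · nlinarith [h1.1, h1.2]
      · nlinarith [h1.1, h1.2]
    have hyIcc : y ∈ Icc ((m:ℝ)/P) ((m:ℝ)/P + P⁻¹) := by
      constructor
      · have h2 : (m:ℝ) ≤ P * y := by rw [hus] at hu0; linarith
        rw [div_le_iff₀ hPpos]; linarith
      · have h2 : P * y ≤ (m:ℝ) + 1 := by rw [hus] at hu1; linarith
        have h3 : y ≤ ((m:ℝ) + 1)/P := by rw [le_div_iff₀ hPpos]; linarith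
        have h4 : ((m:ℝ)+1)/P = (m:ℝ)/P + P⁻¹ := by field_simp
        linarith [h3, h4.le, h4.ge]
    refine ⟨?_, habs, ?_⟩
    · rw [abs_pos]; exact sub_ne_zero.2 hyne
    · rw [quot_formula n hx hyIcc hyne, hG]
      have : (tau u - tau t) / (u - t) = (tau u - v)/(u - t) := by rw [hvs]
      rw [this]
      linarith [hquot]
  by_cases hcase : (3/5) * t + 7/40 ≤ v
  · -- high case: window (0, 1/32]
    apply key 0 le_rfl (by norm_num)
    intro u hu0 hu1
    have htlow : 23/704 ≤ t := by linarith
    have hult : u < t := by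
      simp only [zero_add] at hu1
      linarith
    have htau : tau u ≤ 5 * u + 1/32 := by
      have := tau_le_lin u
      rw [phi_eq_self (le_of_lt hu0) (by simp only [zero_add] at hu1; linarith)] at this
      exact this
    refine ⟨ne_of_lt hult, ?_⟩
    rw [le_div_iff_of_neg (by linarith : u - t < 0)]
    simp only [zero_add] at hu1
    nlinarith
  · -- low case: window (5/16, 11/32]
    push_neg at hcase
    have htlt : t < 1/4 := by
      by_contra hge
      push_neg at hge
      have : 1/2 ≤ v := tau_ge_quarter ⟨hge, le_of_lt ht⟩
      linarith
    apply key (5/16) (by norm_num) (by norm_num)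
    intro u hu0 hu1
    have hu1' : u ≤ 11/32 := by linarith
    have htau : 5/8 ≤ tau u := tau_ge_F3 ⟨le_of_lt hu0, hu1'⟩
    have hutpos : 0 < u - t := by linarith
    refine ⟨by intro h; rw [h] at hu0; linarith, ?_⟩
    rw [le_div_iff₀ hutpos]
    nlinarith

lemma t_lt_half {x : ℝ} (hx : ∀ (k : ℕ) (z : ℤ), 2^k * x ≠ z) {n : ℕ}
    (hd : deriv (g (n+1)) x = 1) : 2^(n+1)*x - (⌊2^(n+1)*x⌋ : ℝ) < 1/2 := by
  have h := deriv_g hx n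
  rw [hd] at h
  by_cases hpe : Even ⌊2^(n+2)*x⌋
  · obtain ⟨q, hq⟩ := hpe
    have h1 : ((⌊2^(n+2)*x⌋ : ℤ) : ℝ) ≤ 2^(n+2)*x := Int.floor_le _
    have h2 : 2^(n+2)*x < ((⌊2^(n+2)*x⌋ : ℤ) : ℝ) + 1 := Int.lt_floor_add_one _
    rw [hq] at h1 h2
    push_cast at h1 h2
    have hpow : (2:ℝ)^(n+2) = 2 * 2^(n+1) := by rw [pow_succ]; ring
    rw [hpow] at h1 h2
    have h3 : (q:ℝ) ≤ 2^(n+1)*x := by linarith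
    have h4 : 2^(n+1)*x < (q:ℝ) + 1/2 := by linarith
    have hfl : ⌊2^(n+1)*x⌋ = q := by
      apply Int.floor_eq_iff.2
      exact ⟨h3, by linarith⟩
    rw [hfl]
    linarith
  · rw [if_neg hpe] at h
    norm_num at h

lemma good_n {x : ℝ} (hx : ∀ (k : ℕ) (z : ℤ), 2^k * x ≠ z) {I : ℝ}
    (hI : liminf (fun n : ℕ => ((G' n x : ℝ) : EReal)) atTop = (I : EReal)) :
    ∀ M : ℕ, ∃ n, M ≤ n ∧ G' n x = I ∧ deriv (g (n+1)) x = 1 := by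
  have hsig : ∀ j : ℕ, deriv (g (j+1)) x = 1 ∨ deriv (g (j+1)) x = -1 := by
    intro j
    rw [deriv_g hx j]
    by_cases hpe : Even ⌊2^(j+2)*x⌋
    · left; rw [if_pos hpe]
    · right; rw [if_neg hpe]
  have hint : ∀ n : ℕ, ∃ z : ℤ, G' n x = (z : ℝ) := by
    intro n
    induction n with
    | zero => exact ⟨0, by simp [G']⟩
    | succ n ih =>
        obtain ⟨z, hz⟩ := ih
        have hstep : G' (n+1) x = G' n x + deriv (g (n+1)) x := by
          rw [G', G', Finset.sum_range_succ]
        rcases hsig n with h | h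
        · exact ⟨z + 1, by rw [hstep, hz, h]; push_cast; ring⟩
        · exact ⟨z - 1, by rw [hstep, hz, h]; push_cast; ring⟩
  -- frequently below I + 1/2
  have hlt : liminf (fun n : ℕ => ((G' n x : ℝ) : EReal)) atTop < ((I + 1/2 : ℝ) : EReal) := by
    rw [hI]
    exact_mod_cast (by linarith : I < I + 1/2)
  have hfreq : ∃ᶠ n in atTop, G' n x < I + 1/2 := by
    have := frequently_lt_of_liminf_lt (by isBoundedDefault) hlt
    exact this.mono (fun n hn => by exact_mod_cast hn)
  have hgt : ((I - 1/2 : ℝ) : EReal) < liminf (fun n : ℕ => ((G' n x : ℝ) : EReal)) atTop := by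
    rw [hI]
    exact_mod_cast (by linarith : I - 1/2 < I)
  have hev : ∀ᶠ n in atTop, I - 1/2 < G' n x := by
    have := eventually_lt_of_lt_liminf hgt
    exact this.mono (fun n hn => by exact_mod_cast hn)
  obtain ⟨N₀, hN₀⟩ := eventually_atTop.1 hev
  -- pick base point n₀
  obtain ⟨n₀, hn₀lt, hn₀ge⟩ := (hfreq.and_eventually (eventually_ge_atTop N₀)).exists
  set c : ℝ := G' n₀ x with hc
  have hsame : ∀ n : ℕ, N₀ ≤ n → G' n x < I + 1/2 → G' n x = c := by
    intro n hn hltn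
    obtain ⟨z, hz⟩ := hint n
    obtain ⟨z₀, hz₀⟩ := hint n₀
    have e1 : I - 1/2 < (z:ℝ) := by rw [← hz]; exact hN₀ n hn
    have e2 : (z:ℝ) < I + 1/2 := by rw [← hz]; exact hltn
    have e3 : I - 1/2 < (z₀:ℝ) := by rw [← hz₀]; exact hN₀ n₀ hn₀ge
    have e4 : (z₀:ℝ) < I + 1/2 := by rw [← hz₀]; exact hn₀lt
    have : z = z₀ := by
      have h1 : (z:ℝ) < (z₀:ℝ) + 1 := by linarith
      have h2 : (z₀:ℝ) < (z:ℝ) + 1 := by linarith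
      have h1' : z < z₀ + 1 := by exact_mod_cast h1
      have h2' : z₀ < z + 1 := by exact_mod_cast h2
      omega
    rw [hc, hz, hz₀, this]
  have hcI1 : c < I + 1/2 := by rw [hc]; exact hn₀lt
  have hcI2 : I - 1/2 < c := by rw [hc]; exact hN₀ n₀ hn₀ge
  have hgec : ∀ n : ℕ, n₀ ≤ n → c ≤ G' n x := by
    intro n hn
    by_contra hlt'
    push_neg at hlt'
    have hnN : N₀ ≤ n := le_trans hn₀ge hn
    have : G' n x = c := hsame n hnN (by linarith)
    linarith
  -- liminf equals c, hence c = I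
  have hliminf : liminf (fun n : ℕ => ((G' n x : ℝ) : EReal)) atTop = (c : EReal) := by
    apply le_antisymm
    · refine liminf_le_of_frequently_le ?_ (by isBoundedDefault)
      have hfc : ∃ᶠ n in atTop, G' n x = c := by
        apply ((hfreq.and_eventually (eventually_ge_atTop N₀)).mono _)
        rintro n ⟨h1, h2⟩
        exact hsame n h2 h1
      exact hfc.mono (fun n hn => by rw [hn])
    · refine le_liminf_of_le (by isBoundedDefault) ?_
      have : ∀ᶠ n in atTop, c ≤ G' n x :=
        eventually_atTop.2 ⟨n₀, hgec⟩
      exact this.mono (fun n hn => by exact_mod_cast hn)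
  have hcI : c = I := by
    rw [hliminf] at hI
    exact_mod_cast hI
  intro M
  obtain ⟨n, hn1, hn2⟩ := (hfreq.and_eventually (eventually_ge_atTop (max M n₀))).exists
  have hnM : M ≤ n := le_trans (le_max_left _ _) hn2
  have hnn₀ : n₀ ≤ n := le_trans (le_max_right _ _) hn2
  have hGn : G' n x = I := by
    rw [← hcI]
    exact hsame n (le_trans hn₀ge hnn₀) hn1
  refine ⟨n, hnM, hGn, ?_⟩
  have hstep : G' (n+1) x = G' n x + deriv (g (n+1)) x := by
    rw [G', G', Finset.sum_range_succ]
  rcases hsig n with h | h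
  · exact h
  · exfalso
    have h1 : c ≤ G' (n+1) x := hgec (n+1) (le_trans hnn₀ (Nat.le_succ n))
    rw [hstep, hGn, h, ← hcI] at h1
    linarith

lemma le_limsup_aux (f : ℝ → ENNReal) (c : ENNReal)
    (hc : ∀ ε : ℝ, 0 < ε → ∃ r : ℝ, 0 < r ∧ r < ε ∧ c ≤ f r) :
    c ≤ limsup f (nhdsWithin 0 (Ioi 0)) := by
  rw [limsup_eq]
  apply le_sInf
  intro b hb
  simp only [mem_setOf_eq] at hb
  rw [eventually_nhdsWithin_iff] at hb
  obtain ⟨ε, hε, hball⟩ := Metric.eventually_nhds_iff.1 hb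
  obtain ⟨r, hr0, hrε, hcr⟩ := hc ε hε
  have : f r ≤ b := by
    apply hball (by rw [Real.dist_eq]; rw [sub_zero, abs_of_pos hr0]; exact hrε)
    exact hr0
  exact le_trans hcr this

lemma ratio_bound {S : Set ℝ} {c h : ℝ} (hh : 0 < h)
    (hsub : Ioc c (c + (1/32)*h) ⊆ S) :
    ENNReal.ofReal (((2:ℝ)^(6:ℕ))⁻¹) ≤ volume S / ENNReal.ofReal (2*h) := by
  have h1 : volume (Ioc c (c + (1/32)*h)) = ENNReal.ofReal ((1/32)*h) := by
    rw [Real.volume_Ioc]; congr 1; ring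
  have h2 : ENNReal.ofReal ((1/32)*h) ≤ volume S := h1 ▸ measure_mono hsub
  have h3 : ENNReal.ofReal (((2:ℝ)^(6:ℕ))⁻¹) = ENNReal.ofReal ((1/32)*h) / ENNReal.ofReal (2*h) := by
    rw [← ENNReal.ofReal_div_of_pos (by linarith)]
    congr 1
    rw [eq_div_iff (by linarith)]
    norm_num
    ring
  rw [h3]
  exact ENNReal.div_le_div_right h2 _

theorem takagi_density_bounds_of_finite_liminf (x : ℝ) (hx : x ∉ Ddyadic) (I : ℝ)
    (hI : liminf (fun n : ℕ => ((G' n x : ℝ) : EReal)) atTop = (I : EReal))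
    (hT : ∃ L : ℝ, ApproxDerivAt T x L) :
    ENNReal.ofReal (((2 : ℝ) ^ (6 : ℕ))⁻¹) ≤
      limsup (fun r : ℝ =>
        volume {y : ℝ | 0 < |y - x| ∧ |y - x| < r ∧
          (T y - T x) / (y - x) ≤ I + 2 / 5} / ENNReal.ofReal (2 * r))
        (nhdsWithin 0 (Ioi 0)) ∧
    ENNReal.ofReal (((2 : ℝ) ^ (6 : ℕ))⁻¹) ≤
      limsup (fun r : ℝ =>
        volume {y : ℝ | 0 < |y - x| ∧ |y - x| < r ∧
          I + 3 / 5 ≤ (T y - T x) / (y - x)} / ENNReal.ofReal (2 * r))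
        (nhdsWithin 0 (Ioi 0)) := by
  have hx' : ∀ (k : ℕ) (z : ℤ), 2^k * x ≠ (z:ℝ) := by
    intro k z h
    apply hx
    refine mem_iUnion.2 ⟨k, ⟨z, ?_⟩⟩
    have hp : ((2:ℝ)^k) ≠ 0 := by positivity
    rw [eq_div_iff hp]
    rw [← h]; ring
  have hgood := good_n hx' hI
  constructor
  · apply le_limsup_aux
    intro ε hε
    obtain ⟨M, hM⟩ := exists_pow_lt_of_lt_one hε (by norm_num : (1/2:ℝ) < 1)
    obtain ⟨n, hnM, hGI, hd1⟩ := hgood M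
    set r : ℝ := ((2:ℝ)^(n+1))⁻¹ with hr
    have hr0 : 0 < r := by positivity
    have hrε : r < ε := by
      have h1 : r = (1/2:ℝ)^(n+1) := by rw [hr, one_div, inv_pow]
      have h2 : ((1:ℝ)/2)^(n+1) ≤ (1/2)^M :=
        pow_le_pow_of_le_one (by norm_num) (by norm_num) (by omega)
      rw [h1]; linarith
    refine ⟨r, hr0, hrε, ?_⟩
    exact ratio_bound hr0 (claimA n hx' hGI (t_lt_half hx' hd1))
  · apply le_limsup_aux
    intro ε hε
    obtain ⟨M, hM⟩ := exists_pow_lt_of_lt_one hε (by norm_num : (1/2:ℝ) < 1)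
    obtain ⟨n, hnM, hGI, hd1⟩ := hgood M
    set r : ℝ := ((2:ℝ)^(n+1))⁻¹ with hr
    have hr0 : 0 < r := by positivity
    have hrε : r < ε := by
      have h1 : r = (1/2:ℝ)^(n+1) := by rw [hr, one_div, inv_pow]
      have h2 : ((1:ℝ)/2)^(n+1) ≤ (1/2)^M :=
        pow_le_pow_of_le_one (by norm_num) (by norm_num) (by omega)
      rw [h1]; linarith
    refine ⟨r, hr0, hrε, ?_⟩
    obtain ⟨c, hc⟩ := claimB n hx' hGI (t_lt_half hx' hd1)
    exact ratio_bound hr0 hc
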